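/- With the same state-space setup as follows: fix n ≥ 1, k ≥ 1, measurable p₀ : ℝⁿ → [0,∞), q_i : ℝⁿ × ℝⁿ → [0,∞) (0 ≤ i ≤ k), g_i : ℝⁿ → [0,∞) (0 ≤ i ≤ k+1); potentials f₀(z,z') = p₀(z) q₀(z,z') g₀(z) g₁(z'), f_i(z,z') = q_i(z,z') g_{i+1}(z') for 1 ≤ i ≤ k; ρ(z₀,…,z_{k+1}) = ∏_{i=0}^{k} f_i(z_i, z_{i+1}) strictly positive with 0 < ∫ρ < ∞; Π the probability measure with density ρ/∫ρ; reference probability measures η₀,…,η_{k+1} on ℝⁿ absolutely continuous with strictly positive densities e_i; and measurable block upper triangular maps M_i(x,y) = (M_i⁰(x,y), M_i¹(y)) satisfying c₀ := ∫ f₀, Measure.map M₀ (η₀.prod η₁) = measure with density f₀/c₀, and for 1 ≤ i ≤ k, c_i := ∫∫ e_i(x) f_i(M_{i-1}¹(x), y) dx dy ∈ (0,∞) and Measure.map M_i (η_i.prod η_{i+1}) = measure with density (x,y) ↦ e_i(x) f_i(M_{i-1}¹(x), y)/c_i. Define M̄_k(x, y) := (M_{k-1}¹(M_k⁰(x, y)),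 M_k¹(y)). Then Measure.map M̄_k (η_k.prod η_{k+1}) equals the marginal of Π on the pair of coordinates (z_k, z_{k+1}), i.e., the lag-1 smoothing distribution π_{Z_k, Z_{k+1} | y_{0:k+1}}. -/

import Mathlib

open MeasureTheory ProbabilityTheory
open scoped ENNReal

/-- The pairwise potentials of the smoothing density of a state-space model:
`f₀(z,z') = p₀(z) q₀(z,z') g₀(z) g₁(z')` and `f_i(z,z') = q_i(z,z') g_{i+1}(z')` for `i ≥ 1`. -/
noncomputable def potential {n : ℕ} (p₀ : (Fin n → ℝ) → ℝ)
    (q : ℕ → (Fin n → ℝ) → (Fin n → ℝ) → ℝ) (g : ℕ → (Fin n → ℝ) → ℝ) :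
    ℕ → (Fin n → ℝ) → (Fin n → ℝ) → ℝ
  | 0 => fun z z' => p₀ z * q 0 z z' * g 0 z * g 1 z'
  | (i + 1) => fun z z' => q (i + 1) z z' * g (i + 2) z'

/-- The unnormalized smoothing density `ρ(z₀,…,z_{k+1}) = ∏_{i=0}^{k} f_i(z_i, z_{i+1})`. -/
noncomputable def smoothingDensity {n k : ℕ} (p₀ : (Fin n → ℝ) → ℝ)
    (q : ℕ → (Fin n → ℝ) → (Fin n → ℝ) → ℝ) (g : ℕ → (Fin n → ℝ) → ℝ)
    (z : Fin (k + 2) → Fin n → ℝ) : ℝ :=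
  ∏ i : Fin (k + 1), potential p₀ q g i (z i.castSucc) (z i.succ)



noncomputable def chainW {n : ℕ} (G : ℕ → (Fin n → ℝ) → (Fin n → ℝ) → ℝ≥0∞) :
    ℕ → (Fin n → ℝ) → ℝ≥0∞
  | 0 => fun _ => 1
  | (i + 1) => fun y => ∫⁻ x, chainW G i x * G i x y

lemma chainW_succ {n : ℕ} (G : ℕ → (Fin n → ℝ) → (Fin n → ℝ) → ℝ≥0∞) (i : ℕ) (y : Fin n → ℝ) :
    chainW G (i + 1) y = ∫⁻ x, chainW G i x * G i x y := rfl

lemma measurable_chainW {n : ℕ} (G : ℕ → (Fin n → ℝ) → (Fin n → ℝ) → ℝ≥0∞)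
    (hG : ∀ i, Measurable (Function.uncurry (G i))) : ∀ j, Measurable (chainW G j) := by
  intro j
  induction j with
  | zero => exact measurable_const
  | succ j ih =>
    exact Measurable.lintegral_prod_left'
      (f := fun p : (Fin n → ℝ) × (Fin n → ℝ) => chainW G j p.1 * G j p.1 p.2)
      ((ih.comp measurable_fst).mul (hG j))

lemma chain_lintegral {n : ℕ} :
    ∀ (m : ℕ) (G : ℕ → (Fin n → ℝ) → (Fin n → ℝ) → ℝ≥0∞),
      (∀ i, Measurable (Function.uncurry (G i))) →
      ∀ (ψ : (Fin n → ℝ) → (Fin n → ℝ) → ℝ≥0∞), Measurable (Function.uncurry ψ) →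
      ∫⁻ z : Fin (m + 2) → Fin n → ℝ,
          (∏ i : Fin (m + 1), G i (z i.castSucc) (z i.succ)) *
            ψ (z ⟨m, by omega⟩) (z (Fin.last (m + 1)))
        = ∫⁻ w, ∫⁻ v, chainW G m w * G m w v * ψ w v := by
  intro m
  induction m with
  | zero =>
    intro G hG ψ hψ
    have hfmeas : Measurable fun z : Fin 2 → Fin n → ℝ =>
        (∏ i : Fin 1, G i (z i.castSucc) (z i.succ)) *
          ψ (z ⟨0, by omega⟩) (z (Fin.last 1)) := by
      have hco : ∀ (a b : Fin 2), Measurable (fun z : Fin 2 → Fin n → ℝ => (z a, z b)) :=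
        fun a b => (measurable_pi_apply a).prodMk (measurable_pi_apply b)
      apply Measurable.mul
      · apply Finset.measurable_prod
        intro i _
        exact (hG i).comp (hco _ _)
      · exact hψ.comp (hco _ _)
    rw [← (MeasurePreserving.symm _ (volume_preserving_finTwoArrow (Fin n → ℝ))).lintegral_comp
      hfmeas]
    have hpt : ∀ p : (Fin n → ℝ) × (Fin n → ℝ),
        (∏ i : Fin 1, G i ((MeasurableEquiv.finTwoArrow.symm p) i.castSucc)
            ((MeasurableEquiv.finTwoArrow.symm p) i.succ)) *
          ψ ((MeasurableEquiv.finTwoArrow.symm p) ⟨0, by omega⟩)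
            ((MeasurableEquiv.finTwoArrow.symm p) (Fin.last 1))
        = chainW G 0 p.1 * G 0 p.1 p.2 * ψ p.1 p.2 := by
      intro p
      simp [Fin.prod_univ_one, MeasurableEquiv.finTwoArrow_symm_apply, chainW,
        Fin.last, Fin.mk_zero, Fin.mk_one]
    rw [lintegral_congr hpt, Measure.volume_eq_prod, lintegral_prod _ (by
      exact ((((measurable_chainW G hG 0).comp measurable_fst).mul (hG 0)).mul hψ).aemeasurable)]
  | succ m ih =>
    intro G hG ψ hψ
    have hco : ∀ (a b : Fin (m + 3)),
        Measurable (fun z : Fin (m + 3) → Fin n → ℝ => (z a, z b)) :=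
      fun a b => (measurable_pi_apply a).prodMk (measurable_pi_apply b)
    have hfmeas : Measurable fun z : Fin (m + 3) → Fin n → ℝ =>
        (∏ i : Fin (m + 2), G i (z i.castSucc) (z i.succ)) *
          ψ (z ⟨m + 1, by omega⟩) (z (Fin.last (m + 2))) := by
      apply Measurable.mul
      · exact Finset.measurable_prod _ fun i _ => (hG i).comp (hco _ _)
      · exact hψ.comp (hco _ _)
    rw [show (volume : Measure (Fin (m + 3) → Fin n → ℝ))
        = Measure.pi fun _ => volume from volume_pi,
      ← ((measurePreserving_piFinSuccAbove
        (fun _ : Fin (m + 3) => (volume : Measure (Fin n → ℝ))) 0).symm).lintegral_comp hfmeas]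
    have hA : Measurable fun a : Fin n → ℝ => ∫⁻ t, G 0 t a := by
      exact Measurable.lintegral_prod_left' (f := fun p : (Fin n → ℝ) × (Fin n → ℝ) =>
        G 0 p.1 p.2) (hG 0)
    set G' : ℕ → (Fin n → ℝ) → (Fin n → ℝ) → ℝ≥0∞ := fun j =>
      if j = 0 then (fun a b => (∫⁻ t, G 0 t a) * G 1 a b) else fun a b => G (j + 1) a b
      with hG'def
    have hG' : ∀ i, Measurable (Function.uncurry (G' i)) := by
      intro i
      by_cases hi : i = 0
      · subst hi
        simp only [hG'def, if_pos rfl]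
        exact (hA.comp measurable_fst).mul (hG 1)
      · simp only [hG'def, if_neg hi]
        exact hG (i + 1)
    have hpt : ∀ p : (Fin n → ℝ) × (Fin (m + 2) → Fin n → ℝ),
        (∏ i : Fin (m + 2),
            G i (((MeasurableEquiv.piFinSuccAbove (fun _ : Fin (m + 3) => Fin n → ℝ) 0).symm p)
              i.castSucc)
              (((MeasurableEquiv.piFinSuccAbove (fun _ : Fin (m + 3) => Fin n → ℝ) 0).symm p)
              i.succ)) *
          ψ (((MeasurableEquiv.piFinSuccAbove (fun _ : Fin (m + 3) => Fin n → ℝ) 0).symm p)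
              ⟨m + 1, by omega⟩)
            (((MeasurableEquiv.piFinSuccAbove (fun _ : Fin (m + 3) => Fin n → ℝ) 0).symm p)
              (Fin.last (m + 2)))
        = G 0 p.1 (p.2 0) * ((∏ i : Fin (m + 1), G (i + 1) (p.2 i.castSucc) (p.2 i.succ)) *
            ψ (p.2 ⟨m, by omega⟩) (p.2 (Fin.last (m + 1)))) := by
      rintro ⟨x, w⟩
      have hsymm : ((MeasurableEquiv.piFinSuccAbove (fun _ : Fin (m + 3) => Fin n → ℝ) 0).symm
          (x, w)) = Fin.cons x w := by
        simp [MeasurableEquiv.piFinSuccAbove_symm_apply, Fin.insertNth_zero, Fin.consEquiv]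
      rw [hsymm, Fin.prod_univ_succ]
      have c3 : ∀ i : Fin (m + 1), (Fin.cons x w : Fin (m + 3) → Fin n → ℝ) i.succ.castSucc
          = w i.castSucc := by
        intro i; rw [← Fin.succ_castSucc]
        exact Fin.cons_succ (α := fun _ : Fin (m + 3) => Fin n → ℝ) x w i.castSucc
      have c5 : (Fin.cons x w : Fin (m + 3) → Fin n → ℝ) ⟨m + 1, by omega⟩
          = w ⟨m, by omega⟩ :=
        Fin.cons_succ (α := fun _ : Fin (m + 3) => Fin n → ℝ) x w (⟨m, by omega⟩ : Fin (m + 2))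
      have c6 : (Fin.cons x w : Fin (m + 3) → Fin n → ℝ) (Fin.last (m + 2))
          = w (Fin.last (m + 1)) := by
        rw [← Fin.succ_last]
        exact Fin.cons_succ (α := fun _ : Fin (m + 3) => Fin n → ℝ) x w (Fin.last (m + 1))
      simp only [Fin.castSucc_zero, Fin.cons_zero, Fin.cons_succ, c3, c5, c6,
        Fin.val_zero, Fin.val_succ, mul_assoc]
    have hmeas2 : Measurable fun p : (Fin n → ℝ) × (Fin (m + 2) → Fin n → ℝ) =>
        G 0 p.1 (p.2 0) * ((∏ i : Fin (m + 1), G (i + 1) (p.2 i.castSucc) (p.2 i.succ)) *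
          ψ (p.2 ⟨m, by omega⟩) (p.2 (Fin.last (m + 1)))) := by
      have hco2 : ∀ (a b : Fin (m + 2)),
          Measurable (fun p : (Fin n → ℝ) × (Fin (m + 2) → Fin n → ℝ) => (p.2 a, p.2 b)) :=
        fun a b => ((measurable_pi_apply a).comp measurable_snd).prodMk
          ((measurable_pi_apply b).comp measurable_snd)
      apply Measurable.mul
      · exact (hG 0).comp (measurable_fst.prodMk ((measurable_pi_apply 0).comp measurable_snd))
      · apply Measurable.mul
        · exact Finset.measurable_prod _ fun i _ => (hG (i + 1)).comp (hco2 _ _)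
        · exact hψ.comp (hco2 _ _)
    rw [lintegral_congr hpt, lintegral_prod_symm' _ hmeas2,
      show (Measure.pi fun _ : Fin (m + 2) => (volume : Measure (Fin n → ℝ))) = volume
        from volume_pi.symm]
    have hstep : ∀ w : Fin (m + 2) → Fin n → ℝ,
        (∫⁻ x, G 0 x (w 0) * ((∏ i : Fin (m + 1), G (i + 1) (w i.castSucc) (w i.succ)) *
            ψ (w ⟨m, by omega⟩) (w (Fin.last (m + 1)))))
        = (∏ i : Fin (m + 1), G' i (w i.castSucc) (w i.succ)) *
            ψ (w ⟨m, by omega⟩) (w (Fin.last (m + 1))) := by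
      intro w
      have h0 : Measurable fun x : Fin n → ℝ => G 0 x (w 0) :=
        (hG 0).comp (measurable_id.prodMk measurable_const)
      rw [lintegral_mul_const _ h0, 
        Fin.prod_univ_succ (f := fun i : Fin (m + 1) => G' i (w i.castSucc) (w i.succ)),
        Fin.prod_univ_succ (f := fun i : Fin (m + 1) => G (i + 1) (w i.castSucc) (w i.succ))]
      simp only [hG'def, Fin.val_succ, Fin.val_zero, if_pos rfl,
        if_neg (Nat.succ_ne_zero _), Nat.zero_add, Fin.castSucc_zero]
      ring
    rw [lintegral_congr hstep, ih G' hG' ψ hψ]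
    have hsh : ∀ j (y : Fin n → ℝ), chainW G' (j + 1) y = chainW G (j + 2) y := by
      intro j
      induction j with
      | zero =>
        intro y
        rw [chainW_succ, chainW_succ]
        refine lintegral_congr fun x => ?_
        have h1 : chainW G' 0 x = 1 := rfl
        have h2 : chainW G 1 x = ∫⁻ t, chainW G 0 t * G 0 t x := rfl
        rw [h1, h2, one_mul]
        simp only [hG'def, if_pos rfl]
        congr 1
        refine lintegral_congr fun t => ?_
        have h3 : chainW G 0 t = 1 := rfl
        rw [h3, one_mul]
      | succ j ihj =>
        intro y
        rw [chainW_succ, chainW_succ]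
        refine lintegral_congr fun x => ?_
        rw [ihj x]
        congr 1
    refine lintegral_congr fun w => lintegral_congr fun v => ?_
    cases m with
    | zero =>
      have h1 : chainW G' 0 w = 1 := rfl
      have h2 : G' 0 w v = (∫⁻ t, G 0 t w) * G 1 w v := by simp only [hG'def, if_pos rfl]
      have h3 : chainW G 1 w = ∫⁻ t, chainW G 0 t * G 0 t w := rfl
      rw [h1, h2, h3, one_mul]
      congr 2
      refine lintegral_congr fun t => ?_
      have h4 : chainW G 0 t = 1 := rfl
      rw [h4, one_mul]
    | succ m' =>
      rw [hsh m' w]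
      congr 2

lemma map_snd_withDensity {A B : Type*} [MeasurableSpace A] [MeasurableSpace B]
    (μ : Measure A) (ν : Measure B) [SFinite μ] [SFinite ν]
    (f : A × B → ℝ≥0∞) (hf : Measurable f) :
    Measure.map Prod.snd ((μ.prod ν).withDensity f)
      = ν.withDensity fun y => ∫⁻ x, f (x, y) ∂μ := by
  ext s hs
  rw [Measure.map_apply measurable_snd hs, withDensity_apply _ (measurable_snd hs),
    withDensity_apply _ hs]
  have hpre : Prod.snd ⁻¹' s = (Set.univ : Set A) ×ˢ s := by ext p; simp
  rw [hpre, ← Measure.prod_restrict, Measure.restrict_univ,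
    lintegral_prod_symm _ hf.aemeasurable]

/-- **Lag-1 smoothing via decomposable transports.**
Under the transport recursion of the decomposition theorem for state-space models, the map
`M̄_k(x,y) = (M_{k-1}¹(M_k⁰(x,y)), M_k¹(y))` pushes `η_k ⊗ η_{k+1}` forward to the lag-1
smoothing distribution, i.e. the `(z_k, z_{k+1})`-marginal of the smoothing posterior `Π`. -/
theorem lag_one_smoothing_of_recursion
    (n k : ℕ) (hn : 0 < n) (hk : 1 ≤ k)
    (p₀ : (Fin n → ℝ) → ℝ)
    (q : ℕ → (Fin n → ℝ) → (Fin n → ℝ) → ℝ)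
    (g : ℕ → (Fin n → ℝ) → ℝ)
    (hp₀ : Measurable p₀) (hp₀pos : ∀ z, 0 ≤ p₀ z)
    (hq : ∀ i ≤ k, Measurable (Function.uncurry (q i)))
    (hqpos : ∀ i ≤ k, ∀ z z', 0 ≤ q i z z')
    (hg : ∀ i ≤ k + 1, Measurable (g i))
    (hgpos : ∀ i ≤ k + 1, ∀ z, 0 ≤ g i z)
    (hρpos : ∀ z, 0 < smoothingDensity (k := k) p₀ q g z)
    (hρint : Integrable (smoothingDensity (k := k) p₀ q g))
    (hρmass : 0 < ∫ z, smoothingDensity (k := k) p₀ q g z)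
    (η : ℕ → Measure (Fin n → ℝ)) (e : ℕ → (Fin n → ℝ) → ℝ)
    (hηprob : ∀ i ≤ k + 1, IsProbabilityMeasure (η i))
    (hemeas : ∀ i ≤ k + 1, Measurable (e i))
    (hηd : ∀ i ≤ k + 1,
      η i = (volume : Measure (Fin n → ℝ)).withDensity (fun x => ENNReal.ofReal (e i x)))
    (hepos : ∀ i ≤ k + 1, ∀ x, 0 < e i x)
    (M0 : ℕ → (Fin n → ℝ) × (Fin n → ℝ) → (Fin n → ℝ))
    (M1 : ℕ → (Fin n → ℝ) → (Fin n → ℝ))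
    (hM0 : ∀ i ≤ k, Measurable (M0 i)) (hM1 : ∀ i ≤ k, Measurable (M1 i))
    (c : ℕ → ℝ)
    (hc0 : c 0 = ∫ p : (Fin n → ℝ) × (Fin n → ℝ), potential p₀ q g 0 p.1 p.2)
    (hf0int : Integrable (fun p : (Fin n → ℝ) × (Fin n → ℝ) => potential p₀ q g 0 p.1 p.2))
    (hmap0 : Measure.map (fun p : (Fin n → ℝ) × (Fin n → ℝ) => (M0 0 p, M1 0 p.2))
        ((η 0).prod (η 1)) =
      (volume : Measure ((Fin n → ℝ) × (Fin n → ℝ))).withDensity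
        (fun p => ENNReal.ofReal (potential p₀ q g 0 p.1 p.2 / c 0)))
    (hci : ∀ i, 1 ≤ i → i ≤ k →
      c i = ∫ p : (Fin n → ℝ) × (Fin n → ℝ),
        e i p.1 * potential p₀ q g i (M1 (i - 1) p.1) p.2)
    (hciint : ∀ i, 1 ≤ i → i ≤ k →
      Integrable (fun p : (Fin n → ℝ) × (Fin n → ℝ) =>
        e i p.1 * potential p₀ q g i (M1 (i - 1) p.1) p.2))
    (hcipos : ∀ i, 1 ≤ i → i ≤ k → 0 < c i)
    (hmapi : ∀ i, 1 ≤ i → i ≤ k →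
      Measure.map (fun p : (Fin n → ℝ) × (Fin n → ℝ) => (M0 i p, M1 i p.2))
          ((η i).prod (η (i + 1))) =
        (volume : Measure ((Fin n → ℝ) × (Fin n → ℝ))).withDensity
          (fun p => ENNReal.ofReal
            (e i p.1 * potential p₀ q g i (M1 (i - 1) p.1) p.2 / c i))) :
    Measure.map (fun p : (Fin n → ℝ) × (Fin n → ℝ) => (M1 (k - 1) (M0 k p), M1 k p.2))
        ((η k).prod (η (k + 1))) =
      Measure.map (fun z : Fin (k + 2) → Fin n → ℝ => (z ⟨k, by omega⟩, z (Fin.last (k + 1))))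
        ((volume : Measure (Fin (k + 2) → Fin n → ℝ)).withDensity
          (fun z => ENNReal.ofReal (smoothingDensity (k := k) p₀ q g z /
            ∫ z, smoothingDensity (k := k) p₀ q g z))) := by
  classical
  -- nonnegativity, measurability and positivity of the potentials
  have hpotnn : ∀ i, i ≤ k → ∀ x y, 0 ≤ potential p₀ q g i x y := by
    intro i hi x y
    match i with
    | 0 =>
      exact mul_nonneg (mul_nonneg (mul_nonneg (hp₀pos x) (hqpos 0 (by omega) x y))
        (hgpos 0 (by omega) x)) (hgpos 1 (by omega) y)
    | (j+1) =>
      exact mul_nonneg (hqpos (j+1) hi x y) (hgpos (j+2) (by omega) y)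
  have hpotmeas : ∀ i, i ≤ k →
      Measurable (fun p : (Fin n → ℝ) × (Fin n → ℝ) => potential p₀ q g i p.1 p.2) := by
    intro i hi
    match i with
    | 0 =>
      show Measurable fun p : (Fin n → ℝ) × (Fin n → ℝ) =>
        p₀ p.1 * q 0 p.1 p.2 * g 0 p.1 * g 1 p.2
      exact (((hp₀.comp measurable_fst).mul (hq 0 (by omega))).mul
        ((hg 0 (by omega)).comp measurable_fst)).mul ((hg 1 (by omega)).comp measurable_snd)
    | (j+1) =>
      show Measurable fun p : (Fin n → ℝ) × (Fin n → ℝ) => q (j+1) p.1 p.2 * g (j+2) p.2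
      exact (hq (j+1) hi).mul ((hg (j+2) (by omega)).comp measurable_snd)
  have hpotpos : ∀ i, i ≤ k → ∀ x y, 0 < potential p₀ q g i x y := by
    intro i hi x y
    rcases (hpotnn i hi x y).lt_or_eq with h | h
    · exact h
    · exfalso
      set z : Fin (k+2) → Fin n → ℝ :=
        fun j => if (j : ℕ) = i then x else if (j : ℕ) = i + 1 then y else 0 with hzdef
      have hρz := hρpos z
      rw [smoothingDensity] at hρz
      have hz1 : z ((⟨i, by omega⟩ : Fin (k+1)).castSucc) = x := by
        have h1 : z ((⟨i, by omega⟩ : Fin (k+1)).castSucc)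
            = if i = i then x else if i = i + 1 then y else 0 := rfl
        rw [h1, if_pos rfl]
      have hz2 : z ((⟨i, by omega⟩ : Fin (k+1)).succ) = y := by
        have h1 : z ((⟨i, by omega⟩ : Fin (k+1)).succ)
            = if i + 1 = i then x else if i + 1 = i + 1 then y else 0 := rfl
        rw [h1, if_neg (by omega), if_pos rfl]
      have hfac : potential p₀ q g ((⟨i, by omega⟩ : Fin (k+1)) : ℕ)
          (z (⟨i, by omega⟩ : Fin (k+1)).castSucc) (z (⟨i, by omega⟩ : Fin (k+1)).succ) = 0 := by
        rw [hz1, hz2]; exact h.symm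
      have := Finset.prod_eq_zero
        (f := fun j : Fin (k+1) => potential p₀ q g (j : ℕ) (z j.castSucc) (z j.succ))
        (Finset.mem_univ (⟨i, by omega⟩ : Fin (k+1))) hfac
      rw [this] at hρz
      exact lt_irrefl _ hρz
  have hc0pos : 0 < c 0 := by
    rw [hc0]
    rw [integral_pos_iff_support_of_nonneg
      (f := fun p : (Fin n → ℝ) × (Fin n → ℝ) => potential p₀ q g 0 p.1 p.2)
      (fun p => (hpotpos 0 (by omega) p.1 p.2).le) hf0int]
    have hsupp : Function.support
        (fun p : (Fin n → ℝ) × (Fin n → ℝ) => potential p₀ q g 0 p.1 p.2) = Set.univ :=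
      Set.eq_univ_of_forall fun p => (hpotpos 0 (by omega) p.1 p.2).ne'
    rw [hsupp, Measure.volume_eq_prod, ← Set.univ_prod_univ, Measure.prod_prod]
    have hvol : (0:ℝ≥0∞) < volume (Set.univ : Set (Fin n → ℝ)) := by
      rw [volume_pi, Measure.pi_univ]
      refine CanonicallyOrderedAdd.prod_pos.mpr fun i _ => ?_
      rw [Real.volume_univ]; exact ENNReal.zero_lt_top
    exact ENNReal.mul_pos hvol.ne' hvol.ne'
  -- the ENNReal-valued potentials
  set F : ℕ → (Fin n → ℝ) → (Fin n → ℝ) → ℝ≥0∞ := fun j x y =>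
    if j ≤ k then ENNReal.ofReal (potential p₀ q g j x y) else 1 with hFdef
  have hFle : ∀ j, j ≤ k → ∀ x y, F j x y = ENNReal.ofReal (potential p₀ q g j x y) := by
    intro j hj x y; simp only [hFdef, if_pos hj]
  have hFmeas : ∀ j, Measurable (Function.uncurry (F j)) := by
    intro j
    by_cases hj : j ≤ k
    · have h1 : Function.uncurry (F j) = fun p : (Fin n → ℝ) × (Fin n → ℝ) =>
          ENNReal.ofReal (potential p₀ q g j p.1 p.2) := by
        funext p; simp only [Function.uncurry, hFdef, if_pos hj]
      rw [h1]; exact ENNReal.measurable_ofReal.comp (hpotmeas j hj)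
    · have h1 : Function.uncurry (F j) = fun _ => (1 : ℝ≥0∞) := by
        funext p; simp only [Function.uncurry, hFdef, if_neg hj]
      rw [h1]; exact measurable_const
  have hWmeas := measurable_chainW F hFmeas
  set dd : ℕ → ℝ≥0∞ := fun i => ∫⁻ y, chainW F (i + 1) y with hdddef
  -- a key computation for integrals against the pushforward of `η i` under `M1 (i-1)`
  have hinner : ∀ i, 1 ≤ i → i ≤ k →
      Measure.map (M1 (i - 1)) (η i)
        = volume.withDensity (fun y => chainW F i y / dd (i - 1)) →
      ∀ (Ψ : (Fin n → ℝ) → ℝ≥0∞), Measurable Ψ →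
      ∫⁻ x, ENNReal.ofReal (e i x) * Ψ (M1 (i - 1) x)
        = (∫⁻ w, chainW F i w * Ψ w) / dd (i - 1) := by
    intro i h1 hik hmap Ψ hΨ
    have hM1m : Measurable (M1 (i - 1)) := hM1 (i - 1) (by omega)
    have hedm : Measurable fun x : Fin n → ℝ => ENNReal.ofReal (e i x) := by
      exact ENNReal.measurable_ofReal.comp (hemeas i (by omega))
    have hΨc : Measurable fun x : Fin n → ℝ => Ψ (M1 (i - 1) x) := by exact hΨ.comp hM1m
    have cal1 : ∫⁻ x, ENNReal.ofReal (e i x) * Ψ (M1 (i - 1) x)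
        = ∫⁻ x, Ψ (M1 (i - 1) x) ∂(η i) := by
      rw [hηd i (by omega)]
      exact (lintegral_withDensity_eq_lintegral_mul volume hedm hΨc).symm
    have hfd : Measurable fun y : Fin n → ℝ => chainW F i y / dd (i - 1) := by
      exact (hWmeas i).div measurable_const
    rw [cal1, ← lintegral_map hΨ hM1m, hmap,
      lintegral_withDensity_eq_lintegral_mul volume hfd hΨ]
    have h2 : ∀ w, ((fun y => chainW F i y / dd (i-1)) * Ψ) w
        = chainW F i w * Ψ w * (dd (i-1))⁻¹ := by
      intro w
      simp only [Pi.mul_apply, div_eq_mul_inv]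
      ring
    rw [lintegral_congr h2, lintegral_mul_const (f := fun w => chainW F i w * Ψ w) _ ((hWmeas i).mul hΨ), div_eq_mul_inv]
  -- the normalizing constants
  have hnorm : ∀ i, 1 ≤ i → i ≤ k →
      Measure.map (M1 (i - 1)) (η i)
        = volume.withDensity (fun y => chainW F i y / dd (i - 1)) →
      ENNReal.ofReal (c i) = dd i / dd (i - 1) := by
    intro i h1 hik hmap
    rw [hci i h1 hik, ofReal_integral_eq_lintegral_ofReal (hciint i h1 hik)
      (Filter.Eventually.of_forall fun p => mul_nonneg (hepos i (by omega) p.1).le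
        (hpotnn i hik _ _))]
    have hm : Measurable fun p : (Fin n → ℝ) × (Fin n → ℝ) =>
        ENNReal.ofReal (e i p.1 * potential p₀ q g i (M1 (i - 1) p.1) p.2) := by
      exact ENNReal.measurable_ofReal.comp (((hemeas i (by omega)).comp measurable_fst).mul
        ((hpotmeas i hik).comp (((hM1 (i-1) (by omega)).comp measurable_fst).prodMk
          measurable_snd)))
    rw [Measure.volume_eq_prod, lintegral_prod_symm' _ hm]
    have hyy : ∀ y, ∫⁻ x, ENNReal.ofReal (e i x * potential p₀ q g i (M1 (i-1) x) y)
        = chainW F (i + 1) y / dd (i - 1) := by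
      intro y
      have hmΨ : Measurable fun w => F i w y :=
        (hFmeas i).comp (measurable_id.prodMk measurable_const)
      calc ∫⁻ x, ENNReal.ofReal (e i x * potential p₀ q g i (M1 (i-1) x) y)
          = ∫⁻ x, ENNReal.ofReal (e i x) * F i (M1 (i-1) x) y := by
            refine lintegral_congr fun x => ?_
            rw [ENNReal.ofReal_mul (hepos i (by omega) x).le, hFle i hik]
        _ = (∫⁻ w, chainW F i w * F i w y) / dd (i - 1) := hinner i h1 hik hmap _ hmΨ
        _ = chainW F (i + 1) y / dd (i - 1) := by rw [← chainW_succ]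
    rw [lintegral_congr hyy]
    simp only [div_eq_mul_inv]
    rw [lintegral_mul_const _ (hWmeas (i+1))]
  -- the marginal of the transported measure on the second coordinate
  have hsnd : ∀ i, i ≤ k → Measure.map (M1 i) (η (i+1))
      = Measure.map Prod.snd (Measure.map
        (fun p : (Fin n → ℝ) × (Fin n → ℝ) => (M0 i p, M1 i p.2)) ((η i).prod (η (i+1)))) := by
    intro i hik
    haveI := hηprob i (by omega)
    haveI := hηprob (i+1) (by omega)
    have hBm : Measurable fun p : (Fin n → ℝ) × (Fin n → ℝ) => (M0 i p, M1 i p.2) := by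
      exact (hM0 i hik).prodMk ((hM1 i hik).comp measurable_snd)
    rw [Measure.map_map measurable_snd hBm]
    have h1 : (Prod.snd ∘ fun p : (Fin n → ℝ) × (Fin n → ℝ) => (M0 i p, M1 i p.2))
        = (M1 i) ∘ Prod.snd := rfl
    rw [h1, ← Measure.map_map (hM1 i hik) measurable_snd, Measure.map_snd_prod, measure_univ,
      one_smul]
  have hch1 : ∀ y, chainW F 1 y = ∫⁻ x, F 0 x y := by
    intro y
    rw [show chainW F 1 y = ∫⁻ x, chainW F 0 x * F 0 x y from rfl]
    exact lintegral_congr fun x => by rw [show chainW F 0 x = (1:ℝ≥0∞) from rfl, one_mul]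
  -- the filtering recursion
  have claimA : ∀ i, i ≤ k - 1 →
      (Measure.map (M1 i) (η (i+1)) = volume.withDensity (fun y => chainW F (i+1) y / dd i)
        ∧ dd i ≠ 0 ∧ dd i ≠ ⊤) := by
    intro i
    induction i with
    | zero =>
      intro _
      have hdd0 : dd 0 = ENNReal.ofReal (c 0) := by
        have h1 : ENNReal.ofReal (c 0) = ∫⁻ p : (Fin n → ℝ) × (Fin n → ℝ),
            ENNReal.ofReal (potential p₀ q g 0 p.1 p.2) := by
          rw [hc0, ofReal_integral_eq_lintegral_ofReal hf0int
            (Filter.Eventually.of_forall fun p => hpotnn 0 (by omega) p.1 p.2)]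
        have hm0 : Measurable fun p : (Fin n → ℝ) × (Fin n → ℝ) =>
            ENNReal.ofReal (potential p₀ q g 0 p.1 p.2) := by
          exact ENNReal.measurable_ofReal.comp (hpotmeas 0 (by omega))
        rw [h1, Measure.volume_eq_prod, lintegral_prod_symm' _ hm0]
        show (∫⁻ y, chainW F (0 + 1) y) = _
        refine lintegral_congr fun y => ?_
        rw [hch1 y]
        exact lintegral_congr fun x => hFle 0 (by omega) x y
      refine ⟨?_, ?_, ?_⟩
      · have hδ0 : Measurable fun p : (Fin n → ℝ) × (Fin n → ℝ) =>
            ENNReal.ofReal (potential p₀ q g 0 p.1 p.2 / c 0) := by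
          exact ENNReal.measurable_ofReal.comp ((hpotmeas 0 (by omega)).div_const _)
        rw [hsnd 0 (by omega), hmap0, Measure.volume_eq_prod, map_snd_withDensity _ _ _ hδ0]
        congr 1
        funext y
        calc ∫⁻ x, ENNReal.ofReal (potential p₀ q g 0 x y / c 0)
            = ∫⁻ x, F 0 x y * (ENNReal.ofReal (c 0))⁻¹ := by
              refine lintegral_congr fun x => ?_
              rw [ENNReal.ofReal_div_of_pos hc0pos, hFle 0 (by omega), div_eq_mul_inv]
          _ = (∫⁻ x, F 0 x y) * (ENNReal.ofReal (c 0))⁻¹ :=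
              lintegral_mul_const _ ((hFmeas 0).comp (measurable_id.prodMk measurable_const))
          _ = chainW F (0+1) y / dd 0 := by
              rw [hdd0, hch1 y, div_eq_mul_inv]
      · rw [hdd0]; exact (ENNReal.ofReal_pos.mpr hc0pos).ne'
      · rw [hdd0]; exact ENNReal.ofReal_ne_top
    | succ i ihA =>
      intro hik
      have hik' : i + 1 ≤ k := by omega
      obtain ⟨hmapA, hdz, hdt⟩ := ihA (by omega)
      have hmapA' : Measure.map (M1 ((i+1) - 1)) (η (i+1))
          = volume.withDensity (fun y => chainW F (i+1) y / dd ((i+1) - 1)) := by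
        simpa using hmapA
      have hcA := hnorm (i+1) (by omega) hik' hmapA'
      have hcApos : ENNReal.ofReal (c (i+1)) ≠ 0 :=
        (ENNReal.ofReal_pos.mpr (hcipos (i+1) (by omega) hik')).ne'
      have hdd1 : dd (i+1) = dd i * ENNReal.ofReal (c (i+1)) := by
        rw [hcA]
        simp only [Nat.add_sub_cancel]
        rw [ENNReal.mul_div_cancel hdz hdt]
      have hdz1 : dd (i+1) ≠ 0 := by
        rw [hdd1]; exact mul_ne_zero hdz hcApos
      have hdt1 : dd (i+1) ≠ ⊤ := by
        rw [hdd1]; exact ENNReal.mul_ne_top hdt ENNReal.ofReal_ne_top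
      refine ⟨?_, hdz1, hdt1⟩
      have hδm : Measurable fun p : (Fin n → ℝ) × (Fin n → ℝ) =>
          ENNReal.ofReal (e (i+1) p.1 * potential p₀ q g (i+1) (M1 ((i+1)-1) p.1) p.2
            / c (i+1)) := by
        exact ENNReal.measurable_ofReal.comp ((((hemeas (i+1) (by omega)).comp
          measurable_fst).mul ((hpotmeas (i+1) hik').comp
            (((hM1 ((i+1)-1) (by omega)).comp measurable_fst).prodMk
              measurable_snd))).div_const _)
      rw [hsnd (i+1) hik', hmapi (i+1) (by omega) hik', Measure.volume_eq_prod,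
        map_snd_withDensity _ _ _ hδm]
      congr 1
      funext y
      have hmΨ : Measurable fun w => F (i+1) w y / ENNReal.ofReal (c (i+1)) :=
        ((hFmeas (i+1)).comp (measurable_id.prodMk measurable_const)).div measurable_const
      calc ∫⁻ x, ENNReal.ofReal
              (e (i+1) x * potential p₀ q g (i+1) (M1 ((i+1)-1) x) y / c (i+1))
          = ∫⁻ x, ENNReal.ofReal (e (i+1) x) *
              (F (i+1) (M1 ((i+1)-1) x) y / ENNReal.ofReal (c (i+1))) := by
            refine lintegral_congr fun x => ?_
            rw [ENNReal.ofReal_div_of_pos (hcipos (i+1) (by omega) hik'),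
              ENNReal.ofReal_mul (hepos (i+1) (by omega) x).le, hFle (i+1) hik',
              mul_div_assoc]
        _ = (∫⁻ w, chainW F (i+1) w * (F (i+1) w y / ENNReal.ofReal (c (i+1)))) / dd ((i+1)-1) :=
            hinner (i+1) (by omega) hik' hmapA' _ hmΨ
        _ = ((∫⁻ w, chainW F (i+1) w * F (i+1) w y) * (ENNReal.ofReal (c (i+1)))⁻¹) / dd i := by
            simp only [Nat.add_sub_cancel]
            congr 1
            have hmm : Measurable fun w : Fin n → ℝ => chainW F (i+1) w * F (i+1) w y := by
              exact (hWmeas (i+1)).mul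
                ((hFmeas (i+1)).comp (measurable_id.prodMk measurable_const))
            rw [← lintegral_mul_const _ hmm]
            refine lintegral_congr fun w => ?_
            simp only [div_eq_mul_inv]
            ring
        _ = chainW F (i+1+1) y / dd (i+1) := by
            rw [← chainW_succ, hdd1]
            simp only [div_eq_mul_inv]
            rw [ENNReal.mul_inv (Or.inl hdz) (Or.inl hdt)]
            ring
  -- conclude
  haveI := hηprob k (by omega)
  haveI := hηprob (k+1) (by omega)
  have hk1 : k - 1 + 1 = k := Nat.succ_pred_eq_of_pos hk
  obtain ⟨hmapK, hdzK, hdtK⟩ := claimA (k-1) le_rfl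
  rw [hk1] at hmapK
  have hcK := hnorm k hk le_rfl hmapK
  have hcKpos : ENNReal.ofReal (c k) ≠ 0 := (ENNReal.ofReal_pos.mpr (hcipos k hk le_rfl)).ne'
  have hddK : dd (k-1) * ENNReal.ofReal (c k) = dd k := by
    rw [hcK, ENNReal.mul_div_cancel hdzK hdtK]
  have hdzKk : dd k ≠ 0 := by rw [← hddK]; exact mul_ne_zero hdzK hcKpos
  have hdtKk : dd k ≠ ⊤ := by rw [← hddK]; exact ENNReal.mul_ne_top hdtK ENNReal.ofReal_ne_top
  have hofρ : ∀ z : Fin (k+2) → Fin n → ℝ,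
      ENNReal.ofReal (smoothingDensity (k := k) p₀ q g z)
        = ∏ i : Fin (k+1), F i (z i.castSucc) (z i.succ) := by
    intro z
    rw [smoothingDensity, ENNReal.ofReal_prod_of_nonneg
      (fun (i : Fin (k+1)) _ => hpotnn i.val (Nat.lt_succ_iff.mp i.isLt) _ _)]
    exact Finset.prod_congr rfl
      fun (i : Fin (k+1)) _ => (hFle i.val (Nat.lt_succ_iff.mp i.isLt) _ _).symm
  have hWFmeas : Measurable fun p : (Fin n → ℝ) × (Fin n → ℝ) =>
      chainW F k p.1 * F k p.1 p.2 := by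
    exact ((hWmeas k).comp measurable_fst).mul (hFmeas k)
  have htot : ENNReal.ofReal (∫ z, smoothingDensity (k := k) p₀ q g z) = dd k := by
    rw [ofReal_integral_eq_lintegral_ofReal hρint
      (Filter.Eventually.of_forall fun z => (hρpos z).le)]
    calc ∫⁻ z, ENNReal.ofReal (smoothingDensity (k := k) p₀ q g z)
        = ∫⁻ z : Fin (k+2) → Fin n → ℝ,
            (∏ i : Fin (k+1), F i (z i.castSucc) (z i.succ)) *
              (fun _ _ => (1:ℝ≥0∞)) (z ⟨k, by omega⟩) (z (Fin.last (k+1))) := by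
          refine lintegral_congr fun z => ?_
          rw [hofρ z, mul_one]
      _ = ∫⁻ w, ∫⁻ v, chainW F k w * F k w v * (fun _ _ => (1:ℝ≥0∞)) w v :=
          chain_lintegral k F hFmeas (fun _ _ => (1:ℝ≥0∞)) (by exact measurable_const)
      _ = ∫⁻ v, ∫⁻ w, chainW F k w * F k w v := by
          simp only [mul_one]
          exact lintegral_lintegral_swap hWFmeas.aemeasurable
      _ = dd k := by
          simp only [hdddef]
          exact lintegral_congr fun v => (chainW_succ F k v).symm
  -- the pushforward computation
  have hTmeas : Measurable fun r : (Fin n → ℝ) × (Fin n → ℝ) => (M1 (k-1) r.1, r.2) := by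
    exact ((hM1 (k-1) (by omega)).comp measurable_fst).prodMk measurable_snd
  have hBmeas : Measurable fun p : (Fin n → ℝ) × (Fin n → ℝ) => (M0 k p, M1 k p.2) := by
    exact (hM0 k le_rfl).prodMk ((hM1 k le_rfl).comp measurable_snd)
  have hcompT : (fun p : (Fin n → ℝ) × (Fin n → ℝ) => (M1 (k-1) (M0 k p), M1 k p.2))
      = (fun r : (Fin n → ℝ) × (Fin n → ℝ) => (M1 (k-1) r.1, r.2))
        ∘ (fun p => (M0 k p, M1 k p.2)) := rfl
  rw [hcompT, ← Measure.map_map hTmeas hBmeas, hmapi k hk le_rfl]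
  have hδmeas : Measurable fun p : (Fin n → ℝ) × (Fin n → ℝ) =>
      ENNReal.ofReal (e k p.1 * potential p₀ q g k (M1 (k-1) p.1) p.2 / c k) := by
    exact ENNReal.measurable_ofReal.comp ((((hemeas k (by omega)).comp measurable_fst).mul
      ((hpotmeas k le_rfl).comp (((hM1 (k-1) (by omega)).comp measurable_fst).prodMk
        measurable_snd))).div_const _)
  have hprojmeas : Measurable fun z : Fin (k+2) → Fin n → ℝ =>
      (z ⟨k, by omega⟩, z (Fin.last (k+1))) := by
    exact (measurable_pi_apply _).prodMk (measurable_pi_apply _)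
  have hρhatmeas : Measurable fun z : Fin (k+2) → Fin n → ℝ =>
      ENNReal.ofReal (smoothingDensity (k := k) p₀ q g z /
        ∫ z, smoothingDensity (k := k) p₀ q g z) := by
    apply ENNReal.measurable_ofReal.comp
    apply Measurable.div_const
    show Measurable fun z : Fin (k+2) → Fin n → ℝ =>
      ∏ i : Fin (k+1), potential p₀ q g i (z i.castSucc) (z i.succ)
    apply Finset.measurable_prod
    intro i _
    have hcoz : Measurable fun z : Fin (k+2) → Fin n → ℝ => (z i.castSucc, z i.succ) := by
      exact (measurable_pi_apply _).prodMk (measurable_pi_apply _)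
    exact (hpotmeas i.val (Nat.lt_succ_iff.mp i.isLt)).comp hcoz
  ext s hs
  rw [Measure.map_apply hTmeas hs, withDensity_apply _ (hTmeas hs),
    Measure.map_apply hprojmeas hs, withDensity_apply _ (hprojmeas hs)]
  set Θ : (Fin n → ℝ) × (Fin n → ℝ) → ℝ≥0∞ :=
    fun r => Set.indicator s (fun r' => chainW F k r'.1 * F k r'.1 r'.2) r / dd k with hΘdef
  have hΘmeas : Measurable Θ := by exact (hWFmeas.indicator hs).div measurable_const
  have hIm : ∀ y, Measurable fun w : Fin n → ℝ =>
      Set.indicator s (fun r' : (Fin n → ℝ) × (Fin n → ℝ) =>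
        chainW F k r'.1 * F k r'.1 r'.2) (w, y) :=
    fun y => by exact (hWFmeas.indicator hs).comp (measurable_id.prodMk measurable_const)
  have hLHS : (∫⁻ p in (fun r : (Fin n → ℝ) × (Fin n → ℝ) => (M1 (k-1) r.1, r.2)) ⁻¹' s,
      ENNReal.ofReal (e k p.1 * potential p₀ q g k (M1 (k-1) p.1) p.2 / c k))
      = ∫⁻ y, ∫⁻ w, Θ (w, y) := by
    rw [← lintegral_indicator (hTmeas hs), Measure.volume_eq_prod,
      lintegral_prod_symm' _ (hδmeas.indicator (hTmeas hs))]
    refine lintegral_congr fun y => ?_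
    have hΨm : Measurable fun w : Fin n → ℝ =>
        Set.indicator s (fun r' : (Fin n → ℝ) × (Fin n → ℝ) =>
          F k r'.1 r'.2 / ENNReal.ofReal (c k)) (w, y) :=
      by
        have hFdiv : Measurable fun r' : (Fin n → ℝ) × (Fin n → ℝ) =>
            F k r'.1 r'.2 / ENNReal.ofReal (c k) := by
          exact (hFmeas k).div measurable_const
        exact (hFdiv.indicator hs).comp (measurable_id.prodMk measurable_const)
    have hptw : ∀ x, Set.indicator
        ((fun r : (Fin n → ℝ) × (Fin n → ℝ) => (M1 (k-1) r.1, r.2)) ⁻¹' s)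
        (fun p => ENNReal.ofReal (e k p.1 * potential p₀ q g k (M1 (k-1) p.1) p.2 / c k)) (x, y)
        = ENNReal.ofReal (e k x) *
          Set.indicator s (fun r' : (Fin n → ℝ) × (Fin n → ℝ) =>
            F k r'.1 r'.2 / ENNReal.ofReal (c k)) (M1 (k-1) x, y) := by
      intro x
      by_cases hmem : (M1 (k-1) x, y) ∈ s
      · have hmem' : (x, y) ∈ ((fun r : (Fin n → ℝ) × (Fin n → ℝ) =>
            (M1 (k-1) r.1, r.2)) ⁻¹' s) := hmem
        rw [Set.indicator_of_mem hmem', Set.indicator_of_mem hmem,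
          ENNReal.ofReal_div_of_pos (hcipos k hk le_rfl),
          ENNReal.ofReal_mul (hepos k (by omega) x).le, hFle k le_rfl, mul_div_assoc]
      · have hmem' : (x, y) ∉ ((fun r : (Fin n → ℝ) × (Fin n → ℝ) =>
            (M1 (k-1) r.1, r.2)) ⁻¹' s) := fun hc => hmem hc
        rw [Set.indicator_of_notMem hmem', Set.indicator_of_notMem hmem, mul_zero]
    have h2 : ∀ w, chainW F k w *
        Set.indicator s (fun r' : (Fin n → ℝ) × (Fin n → ℝ) =>
          F k r'.1 r'.2 / ENNReal.ofReal (c k)) (w, y)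
        = Set.indicator s (fun r' : (Fin n → ℝ) × (Fin n → ℝ) =>
            chainW F k r'.1 * F k r'.1 r'.2) (w, y) * (ENNReal.ofReal (c k))⁻¹ := by
      intro w
      by_cases hmem : (w, y) ∈ s
      · rw [Set.indicator_of_mem hmem, Set.indicator_of_mem hmem, div_eq_mul_inv, mul_assoc]
      · rw [Set.indicator_of_notMem hmem, Set.indicator_of_notMem hmem, mul_zero, zero_mul]
    calc ∫⁻ x, Set.indicator
          ((fun r : (Fin n → ℝ) × (Fin n → ℝ) => (M1 (k-1) r.1, r.2)) ⁻¹' s)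
          (fun p => ENNReal.ofReal (e k p.1 * potential p₀ q g k (M1 (k-1) p.1) p.2 / c k)) (x, y)
        = ∫⁻ x, ENNReal.ofReal (e k x) *
            Set.indicator s (fun r' : (Fin n → ℝ) × (Fin n → ℝ) =>
              F k r'.1 r'.2 / ENNReal.ofReal (c k)) (M1 (k-1) x, y) := lintegral_congr hptw
      _ = (∫⁻ w, chainW F k w * Set.indicator s (fun r' : (Fin n → ℝ) × (Fin n → ℝ) =>
              F k r'.1 r'.2 / ENNReal.ofReal (c k)) (w, y)) / dd (k-1) :=
          hinner k hk le_rfl hmapK _ hΨm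
      _ = ((∫⁻ w, Set.indicator s (fun r' : (Fin n → ℝ) × (Fin n → ℝ) =>
              chainW F k r'.1 * F k r'.1 r'.2) (w, y)) * (ENNReal.ofReal (c k))⁻¹) / dd (k-1) := by
          congr 1
          rw [← lintegral_mul_const _ (hIm y)]
          exact lintegral_congr h2
      _ = ∫⁻ w, Θ (w, y) := by
          have h4 : ∫⁻ w, Θ (w, y) = (∫⁻ w, Set.indicator s
              (fun r' : (Fin n → ℝ) × (Fin n → ℝ) =>
                chainW F k r'.1 * F k r'.1 r'.2) (w, y)) * (dd k)⁻¹ := by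
            rw [← lintegral_mul_const _ (hIm y)]
            exact lintegral_congr fun w => by simp only [hΘdef, div_eq_mul_inv]
          rw [h4, ← hddK, ENNReal.mul_inv (Or.inl hdzK) (Or.inl hdtK), div_eq_mul_inv]
          ring
  have hψ'm : Measurable (Function.uncurry (fun w v : Fin n → ℝ =>
      Set.indicator s (fun _ => (1:ℝ≥0∞)) (w, v) * (dd k)⁻¹)) := by
    exact ((measurable_const.indicator hs).comp (measurable_fst.prodMk measurable_snd)).mul
      measurable_const
  have hRHS : (∫⁻ z in (fun z : Fin (k+2) → Fin n → ℝ =>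
        (z ⟨k, by omega⟩, z (Fin.last (k+1)))) ⁻¹' s,
      ENNReal.ofReal (smoothingDensity (k := k) p₀ q g z /
        ∫ z, smoothingDensity (k := k) p₀ q g z))
      = ∫⁻ w, ∫⁻ v, Θ (w, v) := by
    rw [← lintegral_indicator (hprojmeas hs)]
    have hptw : ∀ z : Fin (k+2) → Fin n → ℝ, Set.indicator
        ((fun z : Fin (k+2) → Fin n → ℝ => (z ⟨k, by omega⟩, z (Fin.last (k+1)))) ⁻¹' s)
        (fun z => ENNReal.ofReal (smoothingDensity (k := k) p₀ q g z /
          ∫ z, smoothingDensity (k := k) p₀ q g z)) z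
        = (∏ i : Fin (k+1), F i (z i.castSucc) (z i.succ)) *
          (Set.indicator s (fun _ => (1:ℝ≥0∞)) (z ⟨k, by omega⟩, z (Fin.last (k+1))) *
            (dd k)⁻¹) := by
      intro z
      by_cases hmem : (z ⟨k, by omega⟩, z (Fin.last (k+1))) ∈ s
      · have hmem' : z ∈ ((fun z : Fin (k+2) → Fin n → ℝ =>
            (z ⟨k, by omega⟩, z (Fin.last (k+1)))) ⁻¹' s) := hmem
        rw [Set.indicator_of_mem hmem', Set.indicator_of_mem hmem,
          ENNReal.ofReal_div_of_pos hρmass, hofρ z, htot, div_eq_mul_inv, one_mul]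
      · have hmem' : z ∉ ((fun z : Fin (k+2) → Fin n → ℝ =>
            (z ⟨k, by omega⟩, z (Fin.last (k+1)))) ⁻¹' s) := fun hc => hmem hc
        rw [Set.indicator_of_notMem hmem', Set.indicator_of_notMem hmem, zero_mul, mul_zero]
    calc ∫⁻ z, Set.indicator
          ((fun z : Fin (k+2) → Fin n → ℝ => (z ⟨k, by omega⟩, z (Fin.last (k+1)))) ⁻¹' s)
          (fun z => ENNReal.ofReal (smoothingDensity (k := k) p₀ q g z /
            ∫ z, smoothingDensity (k := k) p₀ q g z)) z
        = ∫⁻ z : Fin (k+2) → Fin n → ℝ,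
            (∏ i : Fin (k+1), F i (z i.castSucc) (z i.succ)) *
              (fun w v : Fin n → ℝ => Set.indicator s (fun _ => (1:ℝ≥0∞)) (w, v) * (dd k)⁻¹)
                (z ⟨k, by omega⟩) (z (Fin.last (k+1))) := lintegral_congr hptw
      _ = ∫⁻ w, ∫⁻ v, chainW F k w * F k w v *
            (fun w v : Fin n → ℝ => Set.indicator s (fun _ => (1:ℝ≥0∞)) (w, v) * (dd k)⁻¹) w v :=
          chain_lintegral k F hFmeas _ hψ'm
      _ = ∫⁻ w, ∫⁻ v, Θ (w, v) := by
          refine lintegral_congr fun w => lintegral_congr fun v => ?_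
          by_cases hmem : (w, v) ∈ s
          · simp only [hΘdef]
            rw [Set.indicator_of_mem hmem, Set.indicator_of_mem hmem, one_mul,
              div_eq_mul_inv, mul_assoc]
          · simp only [hΘdef]
            rw [Set.indicator_of_notMem hmem, Set.indicator_of_notMem hmem, zero_mul,
              mul_zero, ENNReal.zero_div]
  rw [hLHS, hRHS]
  exact lintegral_lintegral_swap (hΘmeas.comp measurable_swap).aemeasurable
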